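/- Let R be a commutative ring and let x, y ∈ R be such that x is a non-zero-divisor in R and the image of y in R/(x) is a non-zero-divisor. Then the commutative square of quotient maps R/(xy) → R/(x), R/(xy) → R/(y), R/(x) → R/(x,y), R/(y) → R/(x,y) is a pullback square of commutative rings: the ring homomorphism R/(xy) → R/(x) × R/(y) induced by the two quotient maps is injective, and its range consists exactly of those pairs whose images in R/(x,y) agree. -/

import Mathlib

/-- If `(x, y)` is a regular sequence on the commutative ring `R`, then the
square `R/(xy) → R/(x), R/(xy) → R/(y), R/(x) → R/(x,y) ← R/(y)` is a pullback
square: the induced map `R/(xy) → R/(x) × R/(y)` is injective, with range the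
pairs having equal image in `R/(x,y)`. -/
theorem stmt3 {R : Type*} [CommRing R] (x y : R)
    (hx : x ∈ nonZeroDivisors R)
    (hy : Ideal.Quotient.mk (Ideal.span {x}) y ∈ nonZeroDivisors (R ⧸ Ideal.span {x}))
    (φ : R ⧸ Ideal.span {x * y} →+* (R ⧸ Ideal.span {x}) × (R ⧸ Ideal.span {y}))
    (hφ : ∀ r : R, φ (Ideal.Quotient.mk _ r) =
      (Ideal.Quotient.mk _ r, Ideal.Quotient.mk _ r)) :
    Function.Injective φ ∧
      Set.range φ =
        { z : (R ⧸ Ideal.span {x}) × (R ⧸ Ideal.span {y}) |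
          Ideal.Quotient.factor (S := Ideal.span {x}) (T := Ideal.span {x, y})
              (Ideal.span_mono (by simp)) z.1 =
            Ideal.Quotient.factor (S := Ideal.span {y}) (T := Ideal.span {x, y})
              (Ideal.span_mono (by simp)) z.2 } := by
  constructor
  · rw [injective_iff_map_eq_zero]
    intro a ha
    obtain ⟨r, rfl⟩ := Ideal.Quotient.mk_surjective a
    rw [hφ, Prod.mk_eq_zero] at ha
    obtain ⟨h1, h2⟩ := ha
    rw [Ideal.Quotient.eq_zero_iff_mem, Ideal.mem_span_singleton] at h1 h2
    obtain ⟨b, rfl⟩ := h2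
    -- y * b ∈ (x), so mk y * mk b = 0, so mk b = 0, so x ∣ b
    have hb : Ideal.Quotient.mk (Ideal.span {x}) b = 0 := by
      apply hy.2
      rw [mul_comm, ← map_mul, Ideal.Quotient.eq_zero_iff_mem, Ideal.mem_span_singleton]
      exact mul_comm y b ▸ h1
    rw [Ideal.Quotient.eq_zero_iff_mem, Ideal.mem_span_singleton] at hb
    obtain ⟨c, rfl⟩ := hb
    rw [Ideal.Quotient.eq_zero_iff_mem, Ideal.mem_span_singleton]
    exact ⟨c, by ring⟩
  · ext z
    constructor
    · rintro ⟨a, rfl⟩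
      obtain ⟨r, rfl⟩ := Ideal.Quotient.mk_surjective a
      rw [hφ]
      simp [Ideal.Quotient.factor_mk]
    · rintro hz
      simp only [Set.mem_setOf_eq] at hz
      obtain ⟨a, ha⟩ := Ideal.Quotient.mk_surjective z.1
      obtain ⟨b, hb⟩ := Ideal.Quotient.mk_surjective z.2
      rw [← ha, ← hb, Ideal.Quotient.factor_mk, Ideal.Quotient.factor_mk,
        Ideal.Quotient.eq, Ideal.mem_span_pair] at hz
      obtain ⟨s, t, hst⟩ := hz
      refine ⟨Ideal.Quotient.mk _ (a - s * x), ?_⟩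
      rw [hφ]
      have h1 : Ideal.Quotient.mk (Ideal.span {x}) (a - s * x) = z.1 := by
        rw [← ha, Ideal.Quotient.eq]
        exact Ideal.mem_span_singleton.mpr ⟨-s, by ring⟩
      have h2 : Ideal.Quotient.mk (Ideal.span {y}) (a - s * x) = z.2 := by
        rw [← hb, Ideal.Quotient.eq]
        refine Ideal.mem_span_singleton.mpr ⟨t, by linear_combination -hst⟩
      rw [h1, h2]
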